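/- (Serfling's bound for sampling without replacement) Let x₁, …, x_n be a list of values in [a, b] with a < b, and let x̄ = (1/n) Σᵢ xᵢ. Draw k of these values X₁, …, X_k uniformly at random without replacement (0 < k ≤ n) and set X = (1/k) Σᵢ Xᵢ. Then for any δ > 0, Pr[X − x̄ ≥ δ] ≤ exp(−2 δ² k n / ((n − k + 1)(b − a)²)). -/

import Mathlib

open scoped Classical

section SerflingAux

open Real Finset

abbrev Inj (n j : ℕ) := {f : Fin j → Fin n // Function.Injective f}

lemma Dpos {q : ℝ} (hq0 : 0 ≤ q) (hq1 : q ≤ 1) (h : ℝ) : 0 < 1 - q + q * exp h := by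
  rcases eq_or_lt_of_le hq0 with rfl | hq
  · simp
  · have := exp_pos h
    nlinarith

lemma hoeff_core {q : ℝ} (hq0 : 0 ≤ q) (hq1 : q ≤ 1) (h : ℝ) :
    (1 - q) * exp (-q * h) + q * exp ((1 - q) * h) ≤ exp (h ^ 2 / 8) := by
  set D : ℝ → ℝ := fun h => 1 - q + q * exp h with hD
  have hDpos : ∀ h, 0 < D h := fun h => Dpos hq0 hq1 h
  set g : ℝ → ℝ := fun h => h ^ 2 / 8 + q * h - Real.log (D h) with hg
  set g1 : ℝ → ℝ := fun h => h / 4 + q - q * exp h / D h with hg1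
  have hDder : ∀ y : ℝ, HasDerivAt D (q * exp y) y := by
    intro y
    exact ((Real.hasDerivAt_exp y).const_mul q).const_add (1 - q)
  have hgder : ∀ y : ℝ, HasDerivAt g (g1 y) y := by
    intro y
    have h1 : HasDerivAt (fun z : ℝ => z ^ 2 / 8 + q * z) (y / 4 + q) y := by
      have := ((hasDerivAt_pow 2 y).div_const 8).add ((hasDerivAt_id y).const_mul q)
      exact this.congr_deriv (by norm_num; ring)
    have h2 : HasDerivAt (fun z => Real.log (D z)) (q * exp y / D y) y :=
      (hDder y).log (hDpos y).ne'
    exact h1.sub h2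
  have hg1der : ∀ y : ℝ, HasDerivAt g1 (1 / 4 - q * (1 - q) * exp y / (D y) ^ 2) y := by
    intro y
    have h1 : HasDerivAt (fun z : ℝ => z / 4 + q) (1 / 4) y := by
      simpa using ((hasDerivAt_id y).div_const 4).add_const q
    have h2 : HasDerivAt (fun z => q * exp z / D z)
        ((q * exp y * D y - q * exp y * (q * exp y)) / (D y) ^ 2) y :=
      (((Real.hasDerivAt_exp y).const_mul q)).div (hDder y) (hDpos y).ne'
    have := h1.sub h2
    refine this.congr_deriv ?_
    have : q * exp y * D y - q * exp y * (q * exp y) = q * (1 - q) * exp y := by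
      simp only [hD]; ring
    rw [this]
  have hg1mono : Monotone g1 := by
    apply monotone_of_deriv_nonneg (fun y => (hg1der y).differentiableAt)
    intro y
    rw [(hg1der y).deriv]
    have hDy := hDpos y
    have he := exp_pos y
    have key : 4 * (q * (1 - q) * exp y) ≤ (D y) ^ 2 := by
      have : ((1 - q) - q * exp y) ^ 2 ≥ 0 := sq_nonneg _
      simp only [hD] at *
      nlinarith
    have h2 : q * (1 - q) * exp y / (D y) ^ 2 ≤ 1 / 4 := by
      rw [div_le_div_iff₀ (by positivity) (by norm_num)]
      linarith
    linarith
  have hg10 : g1 0 = 0 := by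
    simp only [hg1, hD, Real.exp_zero, mul_one]
    have : 1 - q + q = 1 := by ring
    rw [this]
    simp
  have hg0 : g 0 = 0 := by
    simp only [hg, hD, Real.exp_zero, mul_one]
    norm_num
  have key : ∀ y : ℝ, 0 ≤ g y := by
    intro y
    rcases le_total 0 y with hy | hy
    · have mono : MonotoneOn g (Set.Ici 0) := by
        apply monotoneOn_of_deriv_nonneg (convex_Ici 0)
          (fun z _ => (hgder z).differentiableAt.continuousAt.continuousWithinAt)
          (fun z _ => (hgder z).differentiableAt.differentiableWithinAt)
        intro z hz
        rw [(hgder z).deriv]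
        rw [interior_Ici] at hz
        have := hg1mono (le_of_lt hz)
        rw [hg10] at this
        exact this
      have := mono Set.self_mem_Ici hy hy
      rwa [hg0] at this
    · have anti : AntitoneOn g (Set.Iic 0) := by
        apply antitoneOn_of_deriv_nonpos (convex_Iic 0)
          (fun z _ => (hgder z).differentiableAt.continuousAt.continuousWithinAt)
          (fun z _ => (hgder z).differentiableAt.differentiableWithinAt)
        intro z hz
        rw [(hgder z).deriv]
        rw [interior_Iic] at hz
        have := hg1mono (le_of_lt hz)
        rw [hg10] at this
        exact this
      have := anti hy Set.self_mem_Iic hy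
      rwa [hg0] at this
  have hgh := key h
  have hlog : Real.log (D h) ≤ h ^ 2 / 8 + q * h := by
    simp only [hg] at hgh; linarith
  have hDle : D h ≤ exp (h ^ 2 / 8 + q * h) := by
    calc D h = exp (Real.log (D h)) := (exp_log (hDpos h)).symm
    _ ≤ _ := exp_le_exp.2 hlog
  calc (1 - q) * exp (-q * h) + q * exp ((1 - q) * h)
      = exp (-q * h) * D h := by
        simp only [hD]
        have he : exp ((1 - q) * h) = exp (-q * h) * exp h := by
          rw [← Real.exp_add]; ring_nf
        rw [he]; ring
    _ ≤ exp (-q * h) * exp (h ^ 2 / 8 + q * h) := by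
        apply mul_le_mul_of_nonneg_left hDle (exp_pos _).le
    _ = exp (h ^ 2 / 8) := by rw [← Real.exp_add]; ring_nf

lemma finHoeff {ι : Type*} [DecidableEq ι] (T : Finset ι) (hT : T.Nonempty)
    (y : ι → ℝ) (a b : ℝ) (hab : a < b) (hy : ∀ i ∈ T, y i ∈ Set.Icc a b) (s : ℝ) :
    ∑ i ∈ T, exp (s * (y i - (∑ j ∈ T, y j) / T.card)) ≤ T.card * exp (s ^ 2 * (b - a) ^ 2 / 8) := by
  have hcard : (0 : ℝ) < T.card := by exact_mod_cast card_pos.2 hT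
  set m : ℝ := (∑ j ∈ T, y j) / T.card with hm
  have hba : (0 : ℝ) < b - a := by linarith
  have hma : a ≤ m := by
    rw [hm, le_div_iff₀ hcard]
    calc a * T.card = ∑ _j ∈ T, a := by rw [sum_const]; ring
    _ ≤ ∑ j ∈ T, y j := sum_le_sum fun i hi => (hy i hi).1
  have hmb : m ≤ b := by
    rw [hm, div_le_iff₀ hcard]
    calc ∑ j ∈ T, y j ≤ ∑ _j ∈ T, b := sum_le_sum fun i hi => (hy i hi).2
    _ = b * T.card := by rw [sum_const]; ring
  set q : ℝ := (m - a) / (b - a) with hq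
  have hq0 : 0 ≤ q := by apply div_nonneg <;> linarith
  have hq1 : q ≤ 1 := by rw [hq, div_le_one hba]; linarith
  -- pointwise convexity bound
  have hpt : ∀ i ∈ T, exp (s * (y i - m)) ≤
      (b - y i) / (b - a) * exp (s * (a - m)) + (y i - a) / (b - a) * exp (s * (b - m)) := by
    intro i hi
    obtain ⟨hia, hib⟩ := hy i hi
    obtain ⟨θ, hθ⟩ : ∃ θ : ℝ, θ = (b - y i) / (b - a) := ⟨_, rfl⟩
    have hθ0 : 0 ≤ θ := by rw [hθ]; apply div_nonneg <;> linarith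
    have hθ1 : θ ≤ 1 := by rw [hθ, div_le_one hba]; linarith
    have habs : s * (y i - m) = θ * (s * (a - m)) + (1 - θ) * (s * (b - m)) := by
      have : θ * a + (1 - θ) * b = y i := by
        rw [hθ]; field_simp; ring
      linear_combination (-s) * this
    have h1θ0 : (0:ℝ) ≤ 1 - θ := by linarith
    have hsum1 : θ + (1 - θ) = 1 := by ring
    have := convexOn_exp.2 (Set.mem_univ (s * (a - m))) (Set.mem_univ (s * (b - m)))
      hθ0 h1θ0 hsum1
    rw [habs]
    have h1θ : 1 - θ = (y i - a) / (b - a) := by rw [hθ]; field_simp; ring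
    calc exp (θ * (s * (a - m)) + (1 - θ) * (s * (b - m)))
        ≤ θ * exp (s * (a - m)) + (1 - θ) * exp (s * (b - m)) := by
          simpa [smul_eq_mul] using this
      _ = _ := by rw [h1θ, hθ]
  have hsum : ∑ i ∈ T, exp (s * (y i - m)) ≤
      T.card * ((1 - q) * exp (s * (a - m)) + q * exp (s * (b - m))) := by
    calc ∑ i ∈ T, exp (s * (y i - m))
        ≤ ∑ i ∈ T, ((b - y i) / (b - a) * exp (s * (a - m)) + (y i - a) / (b - a) * exp (s * (b - m)))
          := sum_le_sum hpt
      _ = (T.card * b - ∑ j ∈ T, y j) / (b - a) * exp (s * (a - m))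
          + ((∑ j ∈ T, y j) - T.card * a) / (b - a) * exp (s * (b - m)) := by
          rw [sum_add_distrib, ← sum_mul, ← sum_mul, ← sum_div, ← sum_div]
          simp [sum_sub_distrib, mul_comm]
      _ = T.card * ((1 - q) * exp (s * (a - m)) + q * exp (s * (b - m))) := by
          have h1 : (T.card * b - ∑ j ∈ T, y j) / (b - a) = T.card * (1 - q) := by
            rw [hq, hm]; field_simp; ring
          have h2 : ((∑ j ∈ T, y j) - T.card * a) / (b - a) = T.card * q := by
            rw [hq, hm]; field_simp
          rw [h1, h2]; ring
  have hkey : (1 - q) * exp (s * (a - m)) + q * exp (s * (b - m)) ≤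
      exp (s ^ 2 * (b - a) ^ 2 / 8) := by
    have hcore := hoeff_core hq0 hq1 (s * (b - a))
    have e1 : s * (a - m) = -q * (s * (b - a)) := by rw [hq]; field_simp; ring
    have e2 : s * (b - m) = (1 - q) * (s * (b - a)) := by rw [hq]; field_simp; ring
    have e3 : (s * (b - a)) ^ 2 / 8 = s ^ 2 * (b - a) ^ 2 / 8 := by ring
    rw [e1, e2, ← e3]
    exact hcore
  calc ∑ i ∈ T, exp (s * (y i - m)) ≤ _ := hsum
    _ ≤ T.card * exp (s ^ 2 * (b - a) ^ 2 / 8) := by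
        apply mul_le_mul_of_nonneg_left hkey hcard.le

lemma snoc_inj {n j : ℕ} {g : Fin j → Fin n} (hg : Function.Injective g) {v : Fin n}
    (hv : ∀ i, g i ≠ v) : Function.Injective (Fin.snoc g v) := by
  intro p q hpq
  induction p using Fin.lastCases with
  | last =>
    induction q using Fin.lastCases with
    | last => rfl
    | cast q =>
      rw [Fin.snoc_last, Fin.snoc_castSucc] at hpq
      exact absurd hpq.symm (hv q)
  | cast p =>
    induction q using Fin.lastCases with
    | last =>
      rw [Fin.snoc_last, Fin.snoc_castSucc] at hpq
      exact absurd hpq (hv p)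
    | cast q =>
      rw [Fin.snoc_castSucc, Fin.snoc_castSucc] at hpq
      exact congrArg Fin.castSucc (hg hpq)

/-- decomposition of a sum over injections `Fin (j+1) → Fin n`. -/
lemma sum_succ_dec {n : ℕ} (j : ℕ) (F : Inj n (j + 1) → ℝ) :
    ∑ f : Inj n (j + 1), F f
      = ∑ g : Inj n j, ∑ v ∈ (Finset.univ \ Finset.image g.1 Finset.univ),
          (if h : Function.Injective (Fin.snoc g.1 v) then F ⟨_, h⟩ else 0) := by
  have hsig := Finset.sum_sigma' (Finset.univ : Finset (Inj n j))
    (fun g => Finset.univ \ Finset.image g.1 Finset.univ)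
    (fun g v => if h : Function.Injective (Fin.snoc g.1 v) then F ⟨_, h⟩ else 0)
  rw [hsig]
  refine Finset.sum_bij' (i := fun f _ => (⟨⟨Fin.init f.1, ?_⟩, f.1 (Fin.last j)⟩ :
      Σ _g : Inj n j, Fin n)) (j := fun p hp => ⟨Fin.snoc p.1.1 p.2, ?_⟩) ?_ ?_ ?_ ?_ ?_
  · exact fun p q hpq => Fin.castSucc_injective j (f.2 hpq)
  · -- injectivity of snoc
    have hp2 := (Finset.mem_sigma.1 hp).2
    rw [Finset.mem_sdiff] at hp2
    refine snoc_inj p.1.2 fun i hi => hp2.2 ?_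
    exact Finset.mem_image.2 ⟨i, Finset.mem_univ i, hi⟩
  · -- i maps into sigma finset
    intro f _
    rw [Finset.mem_sigma]
    refine ⟨Finset.mem_univ _, ?_⟩
    rw [Finset.mem_sdiff]
    refine ⟨Finset.mem_univ _, fun hmem => ?_⟩
    obtain ⟨i, -, hi⟩ := Finset.mem_image.1 hmem
    have : Fin.castSucc i = Fin.last j := f.2 hi
    exact absurd (congrArg Fin.val this) (by simp [Fin.castSucc, Fin.ext_iff]; omega)
  · intro p hp; exact Finset.mem_univ _
  · -- left inverse
    intro f _
    apply Subtype.ext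
    exact Fin.snoc_init_self f.1
  · -- right inverse
    intro p hp
    refine Sigma.ext ?_ ?_
    · apply Subtype.ext
      simp [Fin.init_snoc]
    · simp [Fin.snoc_last]
  · -- values agree
    intro f _
    rw [dif_pos]
    · congr 1
      apply Subtype.ext
      exact (Fin.snoc_init_self f.1).symm
    · show Function.Injective (Fin.snoc (Fin.init f.1) (f.1 (Fin.last j)))
      rw [Fin.snoc_init_self]
      exact f.2

lemma card_compl {n j : ℕ} (g : Inj n j) :
    ((Finset.univ : Finset (Fin n)) \ Finset.image g.1 Finset.univ).card = n - j := by
  rw [Finset.card_sdiff_of_subset (Finset.subset_univ _), Finset.card_image_of_injective _ g.2]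
  simp

lemma card_succ {n : ℕ} (j : ℕ) (hj : j < n) : (Fintype.card (Inj n (j + 1)) : ℝ)
    = ((n : ℝ) - j) * Fintype.card (Inj n j) := by
  have h := sum_succ_dec (n := n) j (fun _ => (1 : ℝ))
  rw [Finset.sum_const, Finset.card_univ, nsmul_eq_mul, mul_one] at h
  rw [h]
  have : ∀ g : Inj n j, (∑ v ∈ (Finset.univ \ Finset.image g.1 Finset.univ),
      (if _ : Function.Injective (Fin.snoc g.1 v) then (1:ℝ) else 0)) = ((n : ℝ) - j) := by
    intro g
    rw [Finset.sum_congr rfl (fun v hv => ?_), Finset.sum_const, card_compl, nsmul_eq_mul,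
      mul_one, Nat.cast_sub hj.le]
    · rw [dif_pos]
      refine snoc_inj g.2 fun i hi => ?_
      rw [Finset.mem_sdiff] at hv
      exact hv.2 (Finset.mem_image.2 ⟨i, Finset.mem_univ i, hi⟩)
  rw [Finset.sum_congr rfl (fun g _ => this g), Finset.sum_const, Finset.card_univ,
    nsmul_eq_mul]
  ring

lemma mgf_bound {n : ℕ} (a b : ℝ) (hab : a < b) (x : Fin n → ℝ)
    (hx : ∀ i, x i ∈ Set.Icc a b) (t : ℝ) :
    ∀ j : ℕ, j < n →
    ∑ f : Inj n j, exp (t * ((∑ i, x (f.1 i)) - j * ((∑ i, x i) / n)) / ((n : ℝ) - j))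
      ≤ (Fintype.card (Inj n j)) *
        exp (t ^ 2 * (b - a) ^ 2 / 8 * ∑ i ∈ Finset.range j, (1 / ((n : ℝ) - 1 - i)) ^ 2) := by
  intro j
  induction j with
  | zero =>
    intro _
    simp
  | succ j ih =>
    intro hj1
    have hj : j < n := Nat.lt_of_succ_lt hj1
    have hn0 : (0 : ℝ) < n := by exact_mod_cast lt_of_le_of_lt (Nat.zero_le j) hj
    have hc1 : (0 : ℝ) < (n : ℝ) - j := by
      have : (j : ℝ) < n := by exact_mod_cast hj
      linarith
    have hc2 : (0 : ℝ) < (n : ℝ) - j - 1 := by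
      have : ((j : ℝ) + 1) < n := by exact_mod_cast hj1
      linarith
    set μ : ℝ := (∑ i, x i) / n with hμ
    set T : ℝ := ∑ i, x i with hT
    rw [sum_succ_dec j (fun f => exp (t * ((∑ i, x (f.1 i)) - (j+1 : ℕ) * μ) / ((n : ℝ) - (j+1 : ℕ))))]
    -- analyze each g
    have main : ∀ g : Inj n j,
        (∑ v ∈ (Finset.univ \ Finset.image g.1 Finset.univ),
          (if h : Function.Injective (Fin.snoc g.1 v) then
            exp (t * ((∑ i, x ((Fin.snoc g.1 v : Fin (j+1) → Fin n) i)) - (j+1 : ℕ) * μ) / ((n : ℝ) - (j+1 : ℕ))) else 0))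
        ≤ ((n : ℝ) - j) * exp (t * ((∑ i, x (g.1 i)) - j * μ) / ((n : ℝ) - j)) *
          exp (t ^ 2 * (b - a) ^ 2 / 8 * (1 / ((n : ℝ) - 1 - j)) ^ 2) := by
      intro g
      set Sg : Finset (Fin n) := Finset.univ \ Finset.image g.1 Finset.univ with hSg
      have hcard : (Sg.card : ℝ) = (n : ℝ) - j := by
        rw [hSg, card_compl g, Nat.cast_sub hj.le]
      have hne : Sg.Nonempty := by
        rw [← Finset.card_pos]
        have : (0 : ℝ) < (Sg.card : ℝ) := by rw [hcard]; exact hc1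
        exact_mod_cast this
      have hsumSg : ∑ v ∈ Sg, x v = T - ∑ i, x (g.1 i) := by
        have hsub : Finset.image g.1 Finset.univ ⊆ Finset.univ := Finset.subset_univ _
        have := Finset.sum_sdiff (f := x) hsub
        have himg : ∑ v ∈ Finset.image g.1 Finset.univ, x v = ∑ i, x (g.1 i) :=
          Finset.sum_image (fun i _ i' _ h => g.2 h)
        rw [himg] at this
        linarith [this]
      set s : ℝ := t / ((n : ℝ) - j - 1) with hs
      set S : ℝ := ∑ i, x (g.1 i) with hS
      set A : ℝ := t * (S - j * μ) / ((n : ℝ) - j) with hA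
      have hdec : ∀ v ∈ Sg,
          (if h : Function.Injective (Fin.snoc g.1 v) then
            exp (t * ((∑ i, x ((Fin.snoc g.1 v : Fin (j+1) → Fin n) i)) - (j+1 : ℕ) * μ) / ((n : ℝ) - (j+1 : ℕ))) else 0)
          = exp A * exp (s * (x v - (∑ w ∈ Sg, x w) / Sg.card)) := by
        intro v hv
        rw [dif_pos (by
          refine snoc_inj g.2 fun i hi => ?_
          rw [hSg, Finset.mem_sdiff] at hv
          exact hv.2 (Finset.mem_image.2 ⟨i, Finset.mem_univ i, hi⟩))]
        rw [← Real.exp_add]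
        congr 1
        have hsnoc : ∑ i, x ((Fin.snoc g.1 v : Fin (j+1) → Fin n) i) = S + x v := by
          rw [Fin.sum_univ_castSucc]
          simp [Fin.snoc_castSucc, Fin.snoc_last, hS]
        rw [hsnoc, hsumSg, hcard]
        have hnμ : (n : ℝ) * μ = T := by
          rw [hμ, hT]; field_simp
        rw [hA, hs, ← hnμ]
        push_cast
        have hrw : (n : ℝ) - ((j : ℝ) + 1) = (n : ℝ) - (j : ℝ) - 1 := by ring
        rw [hrw]
        field_simp
        ring
      rw [Finset.sum_congr rfl hdec, ← Finset.mul_sum]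
      have hHoeff := finHoeff Sg hne x a b hab (fun i _ => hx i) s
      have hs2 : s ^ 2 * (b - a) ^ 2 / 8 = t ^ 2 * (b - a) ^ 2 / 8 * (1 / ((n : ℝ) - 1 - j)) ^ 2 := by
        have hswap : (n : ℝ) - 1 - j = (n : ℝ) - j - 1 := by ring
        rw [hs, hswap]
        ring
      calc exp A * ∑ v ∈ Sg, exp (s * (x v - (∑ w ∈ Sg, x w) / Sg.card))
          ≤ exp A * ((Sg.card) * exp (s ^ 2 * (b - a) ^ 2 / 8)) :=
            mul_le_mul_of_nonneg_left hHoeff (exp_pos _).le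
        _ = ((n : ℝ) - j) * exp A * exp (t ^ 2 * (b - a) ^ 2 / 8 * (1 / ((n : ℝ) - 1 - j)) ^ 2) := by
            rw [hcard, hs2]; ring
    calc ∑ g : Inj n j, (∑ v ∈ (Finset.univ \ Finset.image g.1 Finset.univ),
          (if h : Function.Injective (Fin.snoc g.1 v) then
            exp (t * ((∑ i, x ((Fin.snoc g.1 v : Fin (j+1) → Fin n) i)) - (j+1 : ℕ) * μ) / ((n : ℝ) - (j+1 : ℕ))) else 0))
        ≤ ∑ g : Inj n j, ((n : ℝ) - j) * exp (t * ((∑ i, x (g.1 i)) - j * μ) / ((n : ℝ) - j)) *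
            exp (t ^ 2 * (b - a) ^ 2 / 8 * (1 / ((n : ℝ) - 1 - j)) ^ 2) :=
          Finset.sum_le_sum fun g _ => main g
      _ = ((n : ℝ) - j) * exp (t ^ 2 * (b - a) ^ 2 / 8 * (1 / ((n : ℝ) - 1 - j)) ^ 2) *
            ∑ g : Inj n j, exp (t * ((∑ i, x (g.1 i)) - j * μ) / ((n : ℝ) - j)) := by
          rw [Finset.mul_sum]
          exact Finset.sum_congr rfl fun g _ => by ring
      _ ≤ ((n : ℝ) - j) * exp (t ^ 2 * (b - a) ^ 2 / 8 * (1 / ((n : ℝ) - 1 - j)) ^ 2) *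
            ((Fintype.card (Inj n j)) *
              exp (t ^ 2 * (b - a) ^ 2 / 8 * ∑ i ∈ Finset.range j, (1 / ((n : ℝ) - 1 - i)) ^ 2)) := by
          apply mul_le_mul_of_nonneg_left (ih hj)
          positivity
      _ = (Fintype.card (Inj n (j + 1))) *
            exp (t ^ 2 * (b - a) ^ 2 / 8 * ∑ i ∈ Finset.range (j + 1), (1 / ((n : ℝ) - 1 - i)) ^ 2) := by
          rw [card_succ j hj, Finset.sum_range_succ, mul_add, Real.exp_add]
          ring

lemma tel_sum (n : ℕ) : ∀ k : ℕ, k < n →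
    ∑ i ∈ Finset.range k, 1 / (((n : ℝ) - 1 - i) * ((n : ℝ) - i)) = k / (n * ((n : ℝ) - k)) := by
  intro k
  induction k with
  | zero => simp
  | succ k ih =>
    intro hk1
    have hk : k < n := Nat.lt_of_succ_lt hk1
    have hn0 : (0 : ℝ) < n := by exact_mod_cast lt_of_le_of_lt (Nat.zero_le k) hk
    have hc1 : (0 : ℝ) < (n : ℝ) - k := by
      have : (k : ℝ) < n := by exact_mod_cast hk
      linarith
    have hc2 : (0 : ℝ) < (n : ℝ) - k - 1 := by
      have : ((k : ℝ) + 1) < n := by exact_mod_cast hk1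
      linarith
    rw [Finset.sum_range_succ, ih hk]
    push_cast
    have h1 : (n : ℝ) - 1 - k = (n : ℝ) - k - 1 := by ring
    have h2 : (n : ℝ) - (k + 1) = (n : ℝ) - k - 1 := by ring
    rw [h1, h2]
    field_simp
    ring

lemma sum_bound (n k : ℕ) (hk : k < n) :
    ∑ i ∈ Finset.range k, (1 / ((n : ℝ) - 1 - i)) ^ 2
      ≤ k * (((n : ℝ) - k) + 1) / (n * ((n : ℝ) - k) ^ 2) := by
  have hn0 : (0 : ℝ) < n := by exact_mod_cast lt_of_le_of_lt (Nat.zero_le k) hk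
  have hm : (0 : ℝ) < (n : ℝ) - k := by
    have : (k : ℝ) < n := by exact_mod_cast hk
    linarith
  set m : ℝ := (n : ℝ) - k with hmdef
  have hstep : ∀ i ∈ Finset.range k, (1 / ((n : ℝ) - 1 - i)) ^ 2
      ≤ (m + 1) / m * (1 / (((n : ℝ) - 1 - i) * ((n : ℝ) - i))) := by
    intro i hi
    rw [Finset.mem_range] at hi
    have hiR : (i : ℝ) ≤ (k : ℝ) - 1 := by
      have : (i : ℝ) + 1 ≤ k := by exact_mod_cast hi
      linarith
    have hu : m ≤ (n : ℝ) - 1 - i := by rw [hmdef]; linarith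
    have hupos : (0 : ℝ) < (n : ℝ) - 1 - i := lt_of_lt_of_le hm hu
    have hu1 : (n : ℝ) - i = ((n : ℝ) - 1 - i) + 1 := by ring
    set u : ℝ := (n : ℝ) - 1 - i with hudef
    rw [hu1, div_pow, one_pow, div_mul_div_comm, mul_one]
    rw [div_le_div_iff₀ (by positivity) (by positivity)]
    nlinarith
  calc ∑ i ∈ Finset.range k, (1 / ((n : ℝ) - 1 - i)) ^ 2
      ≤ ∑ i ∈ Finset.range k, (m + 1) / m * (1 / (((n : ℝ) - 1 - i) * ((n : ℝ) - i))) :=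
        Finset.sum_le_sum hstep
    _ = (m + 1) / m * (k / (n * m)) := by
        rw [← Finset.mul_sum, tel_sum n k hk]
    _ = k * (m + 1) / (n * m ^ 2) := by
        field_simp


/-- Serfling's bound for sampling without replacement: drawing `k` of the `n` values
`x₁, …, xₙ ∈ [a, b]` uniformly at random without replacement (modeled as a uniformly
random injection `Fin k ↪ Fin n`), the probability that the sample average exceeds the
population average by at least `δ` is at most
`exp (−2 δ² k n / ((n − k + 1) (b − a)²))`. -/
theorem stmt_11 (n k : ℕ) (hk : 0 < k) (hkn : k ≤ n)
    (a b : ℝ) (hab : a < b) (x : Fin n → ℝ) (hx : ∀ i, x i ∈ Set.Icc a b)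
    (δ : ℝ) (hδ : 0 < δ) :
    ((Finset.univ.filter
        (fun f : {f : Fin k → Fin n // Function.Injective f} =>
          (1 / k) * ∑ i, x (f.1 i) - (1 / n) * ∑ j, x j ≥ δ)).card : ℝ) /
      ((Finset.univ : Finset {f : Fin k → Fin n // Function.Injective f}).card : ℝ)
      ≤ Real.exp (-2 * δ ^ 2 * k * n / ((n - k + 1) * (b - a) ^ 2)) := by
  rcases eq_or_lt_of_le hkn with heq | hlt
  · -- k = n : sample mean equals population mean, event is empty
    subst heq
    have hempty : (Finset.univ.filter
        (fun f : {f : Fin k → Fin k // Function.Injective f} =>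
          (1 / k) * ∑ i, x (f.1 i) - (1 / k) * ∑ j, x j ≥ δ)) = ∅ := by
      rw [Finset.filter_eq_empty_iff]
      intro f _
      have hbij : Function.Bijective f.1 := Finite.injective_iff_bijective.1 f.2
      have hsum : ∑ i, x (f.1 i) = ∑ j, x j :=
        Fintype.sum_bijective f.1 hbij _ _ (fun i => rfl)
      rw [hsum]
      simp only [ge_iff_le, not_le]
      linarith
    rw [hempty]
    simp only [Finset.card_empty, Nat.cast_zero, zero_div]
    positivity
  · -- k < n
    have hn0 : (0 : ℝ) < n := by exact_mod_cast lt_of_le_of_lt (Nat.zero_le k) hlt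
    have hK0 : (0 : ℝ) < k := by exact_mod_cast hk
    have hm0 : (0 : ℝ) < (n : ℝ) - k := by
      have : (k : ℝ) < n := by exact_mod_cast hlt
      linarith
    set K : ℝ := (k : ℝ) with hKdef
    set m : ℝ := (n : ℝ) - K with hmdef
    set Ssum : ℝ := ∑ i ∈ Finset.range k, (1 / ((n : ℝ) - 1 - i)) ^ 2 with hSsum
    have hSsum0 : 0 < Ssum := by
      rw [hSsum]
      apply Finset.sum_pos
      · intro i hi
        rw [Finset.mem_range] at hi
        have h2 : i + 1 < n := lt_of_le_of_lt (Nat.succ_le_of_lt hi) hlt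
        have h2R : (i : ℝ) + 1 < n := by exact_mod_cast h2
        have h1 : (0 : ℝ) < (n : ℝ) - 1 - i := by linarith
        positivity
      · exact ⟨0, Finset.mem_range.2 hk⟩
    set W : ℝ := (b - a) ^ 2 * Ssum with hW
    have hba : (0 : ℝ) < b - a := by linarith
    have hW0 : 0 < W := by rw [hW]; positivity
    set t₀ : ℝ := 4 * K * δ / (m * W) with ht₀
    have ht₀0 : 0 < t₀ := by rw [ht₀]; positivity
    set N : ℝ := (Fintype.card (Inj n k) : ℝ) with hN
    have hNpos : 0 < N := by
      rw [hN]
      have : Nonempty (Inj n k) := ⟨⟨Fin.castLE hkn, Fin.castLE_injective hkn⟩⟩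
      exact_mod_cast Fintype.card_pos
    set μ : ℝ := (∑ i, x i) / n with hμ
    set F : Finset (Inj n k) := Finset.univ.filter
        (fun f : Inj n k => (1 / (k:ℝ)) * ∑ i, x (f.1 i) - (1 / (n:ℝ)) * ∑ j, x j ≥ δ) with hF
    have hMarkov : (F.card : ℝ) * exp (t₀ * K * δ / m)
        ≤ N * exp (t₀ ^ 2 * (b - a) ^ 2 / 8 * Ssum) := by
      calc (F.card : ℝ) * exp (t₀ * K * δ / m)
          = ∑ _f ∈ F, exp (t₀ * K * δ / m) := by
            rw [Finset.sum_const, nsmul_eq_mul]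
        _ ≤ ∑ f ∈ F, exp (t₀ * ((∑ i, x (f.1 i)) - (k : ℕ) * ((∑ i, x i) / n)) / ((n : ℝ) - k)) := by
            apply Finset.sum_le_sum
            intro f hf
            rw [hF, Finset.mem_filter] at hf
            have hpred := hf.2
            apply Real.exp_le_exp.2
            have hS : K * δ ≤ (∑ i, x (f.1 i)) - K * ((∑ i, x i) / n) := by
              have h1 : (1 / K) * ∑ i, x (f.1 i) - (1 / (n:ℝ)) * ∑ j, x j ≥ δ := hpred
              have h2 : K * ((1 / K) * ∑ i, x (f.1 i) - (1 / (n:ℝ)) * ∑ j, x j) ≥ K * δ :=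
                mul_le_mul_of_nonneg_left h1 hK0.le
              calc K * δ ≤ K * ((1 / K) * ∑ i, x (f.1 i) - (1 / (n:ℝ)) * ∑ j, x j) := h2
                _ = (∑ i, x (f.1 i)) - K * ((∑ i, x i) / n) := by
                    field_simp
            rw [div_le_div_iff₀ hm0 hm0]
            have := mul_le_mul_of_nonneg_left hS ht₀0.le
            nlinarith [this]
        _ ≤ ∑ f : Inj n k, exp (t₀ * ((∑ i, x (f.1 i)) - (k : ℕ) * ((∑ i, x i) / n)) / ((n : ℝ) - k)) :=
            Finset.sum_le_sum_of_subset_of_nonneg (Finset.filter_subset _ _)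
              (fun f _ _ => (exp_pos _).le)
        _ ≤ N * exp (t₀ ^ 2 * (b - a) ^ 2 / 8 * Ssum) := mgf_bound a b hab x hx t₀ k hlt
    have hdiv : (F.card : ℝ) ≤ N * exp (t₀ ^ 2 * (b - a) ^ 2 / 8 * Ssum - t₀ * K * δ / m) := by
      have h1 : (F.card : ℝ) ≤ N * exp (t₀ ^ 2 * (b - a) ^ 2 / 8 * Ssum) / exp (t₀ * K * δ / m) := by
        rw [le_div_iff₀ (exp_pos _)]
        exact hMarkov
      calc (F.card : ℝ) ≤ _ := h1
        _ = N * exp (t₀ ^ 2 * (b - a) ^ 2 / 8 * Ssum - t₀ * K * δ / m) := by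
            rw [Real.exp_sub]; ring
    have hE : t₀ ^ 2 * (b - a) ^ 2 / 8 * Ssum - t₀ * K * δ / m = -2 * K ^ 2 * δ ^ 2 / (m ^ 2 * W) := by
      rw [ht₀, hW]
      have hS0 : Ssum ≠ 0 := hSsum0.ne'
      have hm' : m ≠ 0 := hm0.ne'
      have hba' : b - a ≠ 0 := hba.ne'
      field_simp
      ring
    have hsb := sum_bound n k hlt
    have hsb' : Ssum ≤ K * (m + 1) / ((n : ℝ) * m ^ 2) := hsb
    clear_value K m Ssum W t₀ N μ F
    have hfinal : -2 * K ^ 2 * δ ^ 2 / (m ^ 2 * W) ≤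
        -2 * δ ^ 2 * K * (n : ℝ) / ((m + 1) * (b - a) ^ 2) := by
      have hm1 : (0 : ℝ) < m + 1 := by linarith
      have hpos : 2 * δ ^ 2 * K * (n : ℝ) / ((m + 1) * (b - a) ^ 2)
          ≤ 2 * K ^ 2 * δ ^ 2 / (m ^ 2 * W) := by
        rw [div_le_div_iff₀ (by positivity) (by positivity)]
        have h3 : W ≤ (b - a) ^ 2 * (K * (m + 1) / ((n : ℝ) * m ^ 2)) := by
          rw [hW]
          exact mul_le_mul_of_nonneg_left hsb' (by positivity)
        have hEq : 2 * δ ^ 2 * K * (n : ℝ) * m ^ 2 *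
            ((b - a) ^ 2 * (K * (m + 1) / ((n : ℝ) * m ^ 2)))
            = 2 * K ^ 2 * δ ^ 2 * ((m + 1) * (b - a) ^ 2) := by
          field_simp
        have h4 := mul_le_mul_of_nonneg_left h3
          (show (0:ℝ) ≤ 2 * δ ^ 2 * K * (n : ℝ) * m ^ 2 by positivity)
        linarith [h4, hEq]
      have e1 : -2 * K ^ 2 * δ ^ 2 / (m ^ 2 * W) = -(2 * K ^ 2 * δ ^ 2 / (m ^ 2 * W)) := by ring
      have e2 : -2 * δ ^ 2 * K * (n : ℝ) / ((m + 1) * (b - a) ^ 2)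
          = -(2 * δ ^ 2 * K * (n : ℝ) / ((m + 1) * (b - a) ^ 2)) := by ring
      rw [e1, e2]
      exact neg_le_neg hpos
    have hcardu : ((Finset.univ : Finset (Inj n k)).card : ℝ) = N := by
      rw [hN, Finset.card_univ]
    rw [hcardu, div_le_iff₀ hNpos]
    calc (F.card : ℝ) ≤ N * exp (t₀ ^ 2 * (b - a) ^ 2 / 8 * Ssum - t₀ * K * δ / m) := hdiv
      _ = N * exp (-2 * K ^ 2 * δ ^ 2 / (m ^ 2 * W)) := by rw [hE]
      _ ≤ N * exp (-2 * δ ^ 2 * K * (n : ℝ) / ((m + 1) * (b - a) ^ 2)) := by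
          apply mul_le_mul_of_nonneg_left (Real.exp_le_exp.2 hfinal) hNpos.le
      _ = exp (-2 * δ ^ 2 * K * (n : ℝ) / ((m + 1) * (b - a) ^ 2)) * N := by ring

end SerflingAux
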